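/- Let n, k ∈ ℕ with 1 < k < n and k - (k mod 2) ≥ 2√n (equivalently, (k - k mod 2)² ≥ 4n). Then there exists an (n,k)-selection mechanism that is impartial and (2/k)-optimal. -/

import Mathlib

open Finset

/-- A valid weight matrix: nonnegative entries and zero diagonal. -/
def IsValidMatrix {n : ℕ} (A : Matrix (Fin n) (Fin n) ℝ) : Prop :=
  (∀ i j, 0 ≤ A i j) ∧ ∀ i, A i i = 0

/-- Score of a subset `S` of agents: total weight of votes received by members of `S`. -/
def score {n : ℕ} (A : Matrix (Fin n) (Fin n) ℝ) (S : Finset (Fin n)) : ℝ :=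
  ∑ i : Fin n, ∑ j ∈ S, A i j

/-- The maximum score over all subsets of cardinality `k`. -/
noncomputable def optScore {n : ℕ} (k : ℕ) (A : Matrix (Fin n) (Fin n) ℝ) : ℝ :=
  sSup {x : ℝ | ∃ S : Finset (Fin n), S.card = k ∧ score A S = x}

/-- Impartiality: an agent cannot influence its own selection. -/
def Impartial {n : ℕ} (f : Matrix (Fin n) (Fin n) ℝ → Finset (Fin n)) : Prop :=
  ∀ A A' : Matrix (Fin n) (Fin n) ℝ, IsValidMatrix A → IsValidMatrix A' →
    ∀ i : Fin n, (∀ i', i' ≠ i → A i' = A' i') → (i ∈ f A ↔ i ∈ f A')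

/-- `α`-optimality of an `(n,k)`-selection mechanism. -/
def AlphaOptimal {n : ℕ} (k : ℕ) (f : Matrix (Fin n) (Fin n) ℝ → Finset (Fin n))
    (α : ℝ) : Prop :=
  ∀ A : Matrix (Fin n) (Fin n) ℝ, IsValidMatrix A → α * optScore k A ≤ score A (f A)

namespace Stmt1Aux

variable {n : ℕ}

lemma val_eq {q a b : ℕ} (h1 : a / q = b / q) (h2 : a % q = b % q) : a = b := by
  conv_lhs => rw [← Nat.div_add_mod a q]
  rw [h1, h2, Nat.div_add_mod]

/-- Votes to `j` from agents outside `j`'s grid row. -/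
noncomputable def sOut (q : ℕ) (A : Matrix (Fin n) (Fin n) ℝ) (j : Fin n) : ℝ :=
  ∑ i ∈ Finset.univ.filter (fun i : Fin n => ¬ i.val / q = j.val / q), A i j

/-- Votes to `j` from other agents inside `j`'s grid row. -/
noncomputable def sIn (q : ℕ) (A : Matrix (Fin n) (Fin n) ℝ) (j : Fin n) : ℝ :=
  ∑ i ∈ Finset.univ.filter (fun i : Fin n => i.val / q = j.val / q ∧ i ≠ j), A i j

noncomputable def gR (q : ℕ) (A : Matrix (Fin n) (Fin n) ℝ) (j : Fin n) : ℝ ×ₗ ℕ :=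
  toLex (sOut q A j, n - j.val)

noncomputable def gC (q : ℕ) (A : Matrix (Fin n) (Fin n) ℝ) (j : Fin n) : ℝ ×ₗ ℕ :=
  toLex (sIn q A j, n - j.val)

def isRW (q : ℕ) (A : Matrix (Fin n) (Fin n) ℝ) (j : Fin n) : Prop :=
  ∀ j' : Fin n, j'.val / q = j.val / q → gR q A j' ≤ gR q A j

def isCW (q : ℕ) (A : Matrix (Fin n) (Fin n) ℝ) (j : Fin n) : Prop :=
  ∀ j' : Fin n, j'.val % q = j.val % q → gC q A j' ≤ gC q A j

open Classical in
noncomputable def rwSet (q : ℕ) (A : Matrix (Fin n) (Fin n) ℝ) : Finset (Fin n) :=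
  Finset.univ.filter (fun j => isRW q A j)

open Classical in
noncomputable def cwSet (q : ℕ) (A : Matrix (Fin n) (Fin n) ℝ) : Finset (Fin n) :=
  Finset.univ.filter (fun j => isCW q A j)

noncomputable def sel (q : ℕ) (A : Matrix (Fin n) (Fin n) ℝ) : Finset (Fin n) :=
  rwSet q A ∪ cwSet q A

lemma mem_sel {q : ℕ} {A : Matrix (Fin n) (Fin n) ℝ} {j : Fin n} :
    j ∈ sel q A ↔ isRW q A j ∨ isCW q A j := by
  classical
  simp [sel, rwSet, cwSet]

lemma sOut_nonneg {q : ℕ} {A : Matrix (Fin n) (Fin n) ℝ} (hA : IsValidMatrix A) (j : Fin n) :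
    0 ≤ sOut q A j :=
  Finset.sum_nonneg fun i _ => hA.1 i j

lemma sIn_nonneg {q : ℕ} {A : Matrix (Fin n) (Fin n) ℝ} (hA : IsValidMatrix A) (j : Fin n) :
    0 ≤ sIn q A j :=
  Finset.sum_nonneg fun i _ => hA.1 i j

/-- Column sum decomposition. -/
lemma colSum_eq {q : ℕ} {A : Matrix (Fin n) (Fin n) ℝ} (hA : IsValidMatrix A) (j : Fin n) :
    (∑ i, A i j) = sOut q A j + sIn q A j := by
  classical
  have h1 := Finset.sum_filter_add_sum_filter_not Finset.univ
    (fun i : Fin n => ¬ i.val / q = j.val / q) (fun i => A i j)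
  have h2 := Finset.sum_filter_add_sum_filter_not
    (Finset.univ.filter (fun i : Fin n => ¬ ¬ i.val / q = j.val / q))
    (fun i : Fin n => i ≠ j) (fun i => A i j)
  have e1 : (Finset.univ.filter (fun i : Fin n => ¬ ¬ i.val / q = j.val / q)).filter
      (fun i : Fin n => i ≠ j) =
      Finset.univ.filter (fun i : Fin n => i.val / q = j.val / q ∧ i ≠ j) := by
    rw [Finset.filter_filter]
    apply Finset.filter_congr
    intro i _
    simp only [not_not]
  have e2 : (Finset.univ.filter (fun i : Fin n => ¬ ¬ i.val / q = j.val / q)).filter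
      (fun i : Fin n => ¬ i ≠ j) = {j} := by
    ext i
    simp only [Finset.mem_filter, Finset.mem_univ, true_and, not_not, Finset.mem_singleton]
    constructor
    · rintro ⟨_, h⟩; exact h
    · rintro rfl; exact ⟨rfl, rfl⟩
  rw [e1, e2] at h2
  rw [Finset.sum_singleton] at h2
  rw [hA.2 j, add_zero] at h2
  rw [← h1, ← h2]
  rfl

lemma score_eq {A : Matrix (Fin n) (Fin n) ℝ} (S : Finset (Fin n)) :
    score A S = ∑ j ∈ S, ∑ i, A i j := by
  rw [score, Finset.sum_comm]

lemma gR_mono {q : ℕ} {A : Matrix (Fin n) (Fin n) ℝ} {j j' : Fin n}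
    (h : gR q A j ≤ gR q A j') : sOut q A j ≤ sOut q A j' := by
  rcases Prod.Lex.le_iff.mp h with h' | ⟨h', _⟩
  · exact h'.le
  · exact le_of_eq h'

lemma gC_mono {q : ℕ} {A : Matrix (Fin n) (Fin n) ℝ} {j j' : Fin n}
    (h : gC q A j ≤ gC q A j') : sIn q A j ≤ sIn q A j' := by
  rcases Prod.Lex.le_iff.mp h with h' | ⟨h', _⟩
  · exact h'.le
  · exact le_of_eq h'

lemma gR_inj {q : ℕ} {A : Matrix (Fin n) (Fin n) ℝ} {j j' : Fin n}
    (h : gR q A j = gR q A j') : j = j' := by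
  have h2 : ((sOut q A j, n - j.val) : ℝ × ℕ) = (sOut q A j', n - j'.val) :=
    toLex.injective h
  have h3 : n - j.val = n - j'.val := congrArg Prod.snd h2
  have hj := j.isLt
  have hj' := j'.isLt
  exact Fin.ext (by omega)

lemma gC_inj {q : ℕ} {A : Matrix (Fin n) (Fin n) ℝ} {j j' : Fin n}
    (h : gC q A j = gC q A j') : j = j' := by
  have h2 : ((sIn q A j, n - j.val) : ℝ × ℕ) = (sIn q A j', n - j'.val) :=
    toLex.injective h
  have h3 : n - j.val = n - j'.val := congrArg Prod.snd h2
  have hj := j.isLt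
  have hj' := j'.isLt
  exact Fin.ext (by omega)

/-- Existence of a row winner dominating `j`. -/
lemma exists_rw (q : ℕ) (A : Matrix (Fin n) (Fin n) ℝ) (j : Fin n) :
    ∃ w : Fin n, isRW q A w ∧ w.val / q = j.val / q ∧ sOut q A j ≤ sOut q A w := by
  classical
  have hne : (Finset.univ.filter (fun i : Fin n => i.val / q = j.val / q)).Nonempty :=
    ⟨j, by simp⟩
  obtain ⟨w, hw, hmax⟩ := Finset.exists_max_image _ (gR q A) hne
  simp only [Finset.mem_filter, Finset.mem_univ, true_and] at hw
  refine ⟨w, ?_, hw, ?_⟩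
  · intro j' hj'
    refine hmax j' ?_
    simp only [Finset.mem_filter, Finset.mem_univ, true_and]
    rw [hj', hw]
  · exact gR_mono (hmax j (by simp))

lemma exists_cw (q : ℕ) (A : Matrix (Fin n) (Fin n) ℝ) (j : Fin n) :
    ∃ w : Fin n, isCW q A w ∧ w.val % q = j.val % q ∧ sIn q A j ≤ sIn q A w := by
  classical
  have hne : (Finset.univ.filter (fun i : Fin n => i.val % q = j.val % q)).Nonempty :=
    ⟨j, by simp⟩
  obtain ⟨w, hw, hmax⟩ := Finset.exists_max_image _ (gC q A) hne
  simp only [Finset.mem_filter, Finset.mem_univ, true_and] at hw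
  refine ⟨w, ?_, hw, ?_⟩
  · intro j' hj'
    refine hmax j' ?_
    simp only [Finset.mem_filter, Finset.mem_univ, true_and]
    rw [hj', hw]
  · exact gC_mono (hmax j (by simp))

/-- Each grid row has at most `q` agents. -/
lemma row_card (q : ℕ) (hq : 0 < q) (t : ℕ) :
    (Finset.univ.filter (fun j : Fin n => j.val / q = t)).card ≤ q := by
  classical
  have : (Finset.univ.filter (fun j : Fin n => j.val / q = t)).card ≤ (Finset.range q).card := by
    apply Finset.card_le_card_of_injOn (fun j => j.val % q)
    · intro j hj
      exact Finset.mem_range.mpr (Nat.mod_lt _ hq)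
    · intro a ha b hb hab
      simp only [Finset.mem_coe, Finset.mem_filter, Finset.mem_univ, true_and] at ha hb
      have hab' : a.val % q = b.val % q := hab
      exact Fin.ext (val_eq (ha.trans hb.symm) hab')
  simpa using this

lemma col_card (q : ℕ) (hq : 0 < q) (hn : n ≤ q * q) (t : ℕ) :
    (Finset.univ.filter (fun j : Fin n => j.val % q = t)).card ≤ q := by
  classical
  have : (Finset.univ.filter (fun j : Fin n => j.val % q = t)).card ≤ (Finset.range q).card := by
    apply Finset.card_le_card_of_injOn (fun j => j.val / q)
    · intro j hj
      have : j.val < q * q := lt_of_lt_of_le j.isLt hn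
      exact Finset.mem_range.mpr ((Nat.div_lt_iff_lt_mul hq).mpr this)
    · intro a ha b hb hab
      simp only [Finset.mem_coe, Finset.mem_filter, Finset.mem_univ, true_and] at ha hb
      have hab' : a.val / q = b.val / q := hab
      exact Fin.ext (val_eq hab' (ha.trans hb.symm))
  simpa using this

/-- At most `q` row winners. -/
lemma rw_card (q : ℕ) (hq : 0 < q) (hn : n ≤ q * q) (A : Matrix (Fin n) (Fin n) ℝ) :
    (rwSet q A).card ≤ q := by
  classical
  have : (rwSet q A).card ≤ (Finset.range q).card := by
    apply Finset.card_le_card_of_injOn (fun j => j.val / q)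
    · intro j hj
      have : j.val < q * q := lt_of_lt_of_le j.isLt hn
      exact Finset.mem_range.mpr ((Nat.div_lt_iff_lt_mul hq).mpr this)
    · intro a ha b hb hab
      simp only [rwSet, Finset.mem_coe, Finset.mem_filter, Finset.mem_univ, true_and] at ha hb
      have hab' : a.val / q = b.val / q := hab
      exact gR_inj (le_antisymm (hb a hab') (ha b hab'.symm))
  simpa using this

lemma cw_card (q : ℕ) (hq : 0 < q) (A : Matrix (Fin n) (Fin n) ℝ) :
    (cwSet q A).card ≤ q := by
  classical
  have : (cwSet q A).card ≤ (Finset.range q).card := by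
    apply Finset.card_le_card_of_injOn (fun j => j.val % q)
    · intro j hj
      exact Finset.mem_range.mpr (Nat.mod_lt _ hq)
    · intro a ha b hb hab
      simp only [cwSet, Finset.mem_coe, Finset.mem_filter, Finset.mem_univ, true_and] at ha hb
      have hab' : a.val % q = b.val % q := hab
      exact gC_inj (le_antisymm (hb a hab') (ha b hab'.symm))
  simpa using this

lemma sel_card (q : ℕ) (hq : 0 < q) (hn : n ≤ q * q) (A : Matrix (Fin n) (Fin n) ℝ) :
    (sel q A).card ≤ q + q := by
  calc (sel q A).card ≤ (rwSet q A).card + (cwSet q A).card := Finset.card_union_le _ _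
    _ ≤ q + q := Nat.add_le_add (rw_card q hq hn A) (cw_card q hq A)

/-- Main combinatorial bound. -/
lemma score_le (q : ℕ) (hq : 0 < q) (hn : n ≤ q * q)
    {A : Matrix (Fin n) (Fin n) ℝ} (hA : IsValidMatrix A) (S : Finset (Fin n)) :
    score A S ≤ q * score A (sel q A) := by
  classical
  choose rwF hrw1 hrw2 hrw3 using exists_rw q A
  choose cwF hcw1 hcw2 hcw3 using exists_cw q A
  have step1 : score A S = ∑ j ∈ S, (sOut q A j + sIn q A j) := by
    rw [score_eq]
    exact Finset.sum_congr rfl fun j _ => colSum_eq hA j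
  -- bound the row parts
  have rowbound : ∑ j ∈ S, sOut q A j ≤
      q * ∑ w ∈ S.image rwF, sOut q A w := by
    have h0 : ∑ j ∈ S, sOut q A j ≤ ∑ j ∈ S, sOut q A (rwF j) :=
      Finset.sum_le_sum fun j _ => hrw3 j
    have h1 : ∑ j ∈ S, sOut q A (rwF j) =
        ∑ w ∈ S.image rwF, ∑ j ∈ S.filter (fun j => rwF j = w), sOut q A (rwF j) :=
      (Finset.sum_fiberwise_of_maps_to (fun j hj => Finset.mem_image_of_mem rwF hj) _).symm
    have h2 : ∀ w ∈ S.image rwF,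
        (∑ j ∈ S.filter (fun j => rwF j = w), sOut q A (rwF j)) ≤ q * sOut q A w := by
      intro w hw
      have hcardle : (S.filter (fun j => rwF j = w)).card ≤ q := by
        have hsub : S.filter (fun j => rwF j = w) ⊆
            Finset.univ.filter (fun j : Fin n => j.val / q = w.val / q) := by
          intro j hj
          simp only [Finset.mem_filter] at hj ⊢
          refine ⟨Finset.mem_univ _, ?_⟩
          have h' := hrw2 j
          rw [hj.2] at h'
          exact h'.symm
        exact le_trans (Finset.card_le_card hsub) (row_card q hq _)
      have heq : (∑ j ∈ S.filter (fun j => rwF j = w), sOut q A (rwF j)) =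
          (S.filter (fun j => rwF j = w)).card * sOut q A w := by
        rw [Finset.sum_congr rfl (fun j hj => by
          rw [(Finset.mem_filter.mp hj).2]), Finset.sum_const, nsmul_eq_mul]
      rw [heq]
      have hw0 : 0 ≤ sOut q A w := sOut_nonneg hA w
      have : ((S.filter (fun j => rwF j = w)).card : ℝ) ≤ (q : ℝ) := by
        exact_mod_cast hcardle
      nlinarith
    calc ∑ j ∈ S, sOut q A j ≤ ∑ j ∈ S, sOut q A (rwF j) := h0
      _ = _ := h1
      _ ≤ ∑ w ∈ S.image rwF, q * sOut q A w := Finset.sum_le_sum h2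
      _ = q * ∑ w ∈ S.image rwF, sOut q A w := by rw [Finset.mul_sum]
  have colbound : ∑ j ∈ S, sIn q A j ≤
      q * ∑ w ∈ S.image cwF, sIn q A w := by
    have h0 : ∑ j ∈ S, sIn q A j ≤ ∑ j ∈ S, sIn q A (cwF j) :=
      Finset.sum_le_sum fun j _ => hcw3 j
    have h1 : ∑ j ∈ S, sIn q A (cwF j) =
        ∑ w ∈ S.image cwF, ∑ j ∈ S.filter (fun j => cwF j = w), sIn q A (cwF j) :=
      (Finset.sum_fiberwise_of_maps_to (fun j hj => Finset.mem_image_of_mem cwF hj) _).symm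
    have h2 : ∀ w ∈ S.image cwF,
        (∑ j ∈ S.filter (fun j => cwF j = w), sIn q A (cwF j)) ≤ q * sIn q A w := by
      intro w hw
      have hcardle : (S.filter (fun j => cwF j = w)).card ≤ q := by
        have hsub : S.filter (fun j => cwF j = w) ⊆
            Finset.univ.filter (fun j : Fin n => j.val % q = w.val % q) := by
          intro j hj
          simp only [Finset.mem_filter] at hj ⊢
          refine ⟨Finset.mem_univ _, ?_⟩
          have h' := hcw2 j
          rw [hj.2] at h'
          exact h'.symm
        exact le_trans (Finset.card_le_card hsub) (col_card q hq hn _)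
      have heq : (∑ j ∈ S.filter (fun j => cwF j = w), sIn q A (cwF j)) =
          (S.filter (fun j => cwF j = w)).card * sIn q A w := by
        rw [Finset.sum_congr rfl (fun j hj => by
          rw [(Finset.mem_filter.mp hj).2]), Finset.sum_const, nsmul_eq_mul]
      rw [heq]
      have hw0 : 0 ≤ sIn q A w := sIn_nonneg hA w
      have : ((S.filter (fun j => cwF j = w)).card : ℝ) ≤ (q : ℝ) := by
        exact_mod_cast hcardle
      nlinarith
    calc ∑ j ∈ S, sIn q A j ≤ ∑ j ∈ S, sIn q A (cwF j) := h0
      _ = _ := h1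
      _ ≤ ∑ w ∈ S.image cwF, q * sIn q A w := Finset.sum_le_sum h2
      _ = q * ∑ w ∈ S.image cwF, sIn q A w := by rw [Finset.mul_sum]
  -- winners are selected
  have hRsub : S.image rwF ⊆ sel q A := by
    intro w hw
    obtain ⟨j, _, rfl⟩ := Finset.mem_image.mp hw
    exact mem_sel.mpr (Or.inl (hrw1 j))
  have hCsub : S.image cwF ⊆ sel q A := by
    intro w hw
    obtain ⟨j, _, rfl⟩ := Finset.mem_image.mp hw
    exact mem_sel.mpr (Or.inr (hcw1 j))
  have hR : ∑ w ∈ S.image rwF, sOut q A w ≤ ∑ w ∈ sel q A, sOut q A w :=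
    Finset.sum_le_sum_of_subset_of_nonneg hRsub fun w _ _ => sOut_nonneg hA w
  have hC : ∑ w ∈ S.image cwF, sIn q A w ≤ ∑ w ∈ sel q A, sIn q A w :=
    Finset.sum_le_sum_of_subset_of_nonneg hCsub fun w _ _ => sIn_nonneg hA w
  have hfinal : score A (sel q A) =
      (∑ w ∈ sel q A, sOut q A w) + (∑ w ∈ sel q A, sIn q A w) := by
    rw [score_eq, ← Finset.sum_add_distrib]
    exact Finset.sum_congr rfl fun w _ => colSum_eq hA w
  have hq0 : (0 : ℝ) ≤ q := Nat.cast_nonneg q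
  calc score A S = ∑ j ∈ S, (sOut q A j + sIn q A j) := step1
    _ = (∑ j ∈ S, sOut q A j) + (∑ j ∈ S, sIn q A j) := Finset.sum_add_distrib
    _ ≤ q * (∑ w ∈ S.image rwF, sOut q A w) + q * (∑ w ∈ S.image cwF, sIn q A w) := by
        exact add_le_add rowbound colbound
    _ ≤ q * (∑ w ∈ sel q A, sOut q A w) + q * (∑ w ∈ sel q A, sIn q A w) := by
        exact add_le_add (by nlinarith) (by nlinarith)
    _ = q * score A (sel q A) := by rw [hfinal]; ring

/-- Impartiality of `sel`. -/
lemma sel_impartial (q : ℕ) (A A' : Matrix (Fin n) (Fin n) ℝ)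
    (i : Fin n) (h : ∀ i', i' ≠ i → A i' = A' i') :
    (i ∈ sel q A ↔ i ∈ sel q A') := by
  classical
  have hOut : ∀ j' : Fin n, j'.val / q = i.val / q → sOut q A j' = sOut q A' j' := by
    intro j' hj'
    apply Finset.sum_congr rfl
    intro v hv
    simp only [Finset.mem_filter, Finset.mem_univ, true_and] at hv
    have hvne : v ≠ i := by
      intro hvi; subst hvi; rw [hj'] at hv; exact hv rfl
    rw [h v hvne]
  have hIn : ∀ j' : Fin n, j'.val % q = i.val % q → sIn q A j' = sIn q A' j' := by
    intro j' hj'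
    apply Finset.sum_congr rfl
    intro v hv
    simp only [Finset.mem_filter, Finset.mem_univ, true_and] at hv
    have hvne : v ≠ i := by
      intro hvi
      have hdd : v.val / q = j'.val / q := hv.1
      have hmm : v.val % q = j'.val % q := by rw [hvi]; exact hj'.symm
      exact hv.2 (Fin.ext (val_eq hdd hmm))
    rw [h v hvne]
  have hgR : ∀ j' : Fin n, j'.val / q = i.val / q → gR q A j' = gR q A' j' := by
    intro j' hj'; unfold gR; rw [hOut j' hj']
  have hgC : ∀ j' : Fin n, j'.val % q = i.val % q → gC q A j' = gC q A' j' := by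
    intro j' hj'; unfold gC; rw [hIn j' hj']
  have hRW : isRW q A i ↔ isRW q A' i := by
    constructor <;> intro hh j' hj'
    · rw [← hgR j' hj', ← hgR i rfl]; exact hh j' hj'
    · rw [hgR j' hj', hgR i rfl]; exact hh j' hj'
  have hCW : isCW q A i ↔ isCW q A' i := by
    constructor <;> intro hh j' hj'
    · rw [← hgC j' hj', ← hgC i rfl]; exact hh j' hj'
    · rw [hgC j' hj', hgC i rfl]; exact hh j' hj'
  rw [mem_sel, mem_sel, hRW, hCW]

end Stmt1Aux

/-- For `1 < k < n` and `k - k % 2 ≥ 2√n`, there exists an impartial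
`(n,k)`-selection mechanism that is `(2/k)`-optimal. -/
theorem stmt1 (n k : ℕ) (h1 : 1 < k) (h2 : k < n) (h3 : 4 * n ≤ (k - k % 2) ^ 2) :
    ∃ f : Matrix (Fin n) (Fin n) ℝ → Finset (Fin n),
      (∀ A, (f A).card ≤ k) ∧ Impartial f ∧ AlphaOptimal k f (2 / (k : ℝ)) := by
  classical
  set q : ℕ := (k - k % 2) / 2 with hqdef
  have hm : k - k % 2 = 2 * q := by omega
  have h2q : 2 * q ≤ k := by omega
  have hn : n ≤ q * q := by
    rw [hm] at h3
    have : (2 * q) ^ 2 = 4 * (q * q) := by ring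
    omega
  have hq : 0 < q := by
    rcases Nat.eq_zero_or_pos q with h | h
    · exfalso; rw [h] at hn; omega
    · exact h
  refine ⟨fun A => Stmt1Aux.sel q A, ?_, ?_, ?_⟩
  · intro A
    calc (Stmt1Aux.sel q A).card ≤ q + q := Stmt1Aux.sel_card q hq hn A
      _ ≤ k := by omega
  · intro A A' _ _ i h
    exact Stmt1Aux.sel_impartial q A A' i h
  · intro A hA
    have hk0 : (0 : ℝ) < k := by
      have : 0 < k := by omega
      exact_mod_cast this
    have hscore_nonneg : 0 ≤ score A (Stmt1Aux.sel q A) := by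
      apply Finset.sum_nonneg
      intro i _
      exact Finset.sum_nonneg fun j _ => hA.1 i j
    have hbound : optScore k A ≤ ((k : ℝ) / 2) * score A (Stmt1Aux.sel q A) := by
      apply Real.sSup_le
      · rintro x ⟨S, _, rfl⟩
        have h := Stmt1Aux.score_le q hq hn hA S
        have hqk : (q : ℝ) ≤ (k : ℝ) / 2 := by
          have : (2 * q : ℕ) ≤ k := h2q
          have h' : ((2 * q : ℕ) : ℝ) ≤ (k : ℝ) := by exact_mod_cast this
          push_cast at h'
          linarith
        calc score A S ≤ q * score A (Stmt1Aux.sel q A) := h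
          _ ≤ ((k : ℝ) / 2) * score A (Stmt1Aux.sel q A) := by nlinarith
      · positivity
    have hk' : (k : ℝ) ≠ 0 := ne_of_gt hk0
    calc (2 / (k : ℝ)) * optScore k A
        ≤ (2 / (k : ℝ)) * (((k : ℝ) / 2) * score A (Stmt1Aux.sel q A)) := by
          apply mul_le_mul_of_nonneg_left hbound
          positivity
      _ = score A (Stmt1Aux.sel q A) := by field_simp
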